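/- Let H be a strongly connected simple digraph with at least one arc, let k be a positive integer, and let T be a tournament admitting a vertex ordering of width at most c that does not contain k pairwise vertex-disjoint immersion copies of H. Then there exists a set F of at most 2(k-1)c arcs of T such that T - F contains no immersion copy of H. -/

import Mathlib

/-- `A` is the arc relation of a tournament on `V`. -/
def IsTournament {V : Type} (A : V → V → Prop) : Prop :=
  (∀ v, ¬ A v v) ∧ ∀ u v, u ≠ v → (A u v ↔ ¬ A v u)

/-- `l` is a nonempty directed walk (as a list of arcs) from `a` to `b` in the digraph `A`. -/
def IsArcWalk {V : Type} (A : V → V → Prop) (l : List (V × V)) (a b : V) : Prop :=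
  l ≠ [] ∧ (∀ e ∈ l, A e.1 e.2) ∧ List.Chain' (fun e f => e.2 = f.1) l ∧
    l.head?.map Prod.fst = some a ∧ l.getLast?.map Prod.snd = some b

/-- `φ` (on vertices) together with arc-lists `P` (paths for the arcs of `H`) form an
immersion copy of the digraph `H` inside the digraph `A`: vertices map injectively, each
arc of `H` maps to a directed path (a walk without repeated arcs) between the images of its
endpoints, and these paths are pairwise arc-disjoint. -/
def IsImmersionCopy {W V : Type} (H : W → W → Prop) (A : V → V → Prop)
    (φ : W → V) (P : W → W → List (V × V)) : Prop :=
  Function.Injective φ ∧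
  (∀ u v, H u v → IsArcWalk A (P u v) (φ u) (φ v)) ∧
  (∀ u v, H u v → (P u v).Nodup) ∧
  (∀ u v, ¬ H u v → P u v = []) ∧
  (∀ u v u' v', H u v → H u' v' → (u, v) ≠ (u', v') →
    ∀ e, e ∈ P u v → e ∉ P u' v')

/-- The arcs of an immersion copy: all arcs used by the paths. -/
def copyArcs {W V : Type} (P : W → W → List (V × V)) : Set (V × V) :=
  {e | ∃ u v, e ∈ P u v}

/-- The vertices of an immersion copy: the images of vertices together with all
endpoints of arcs used by the paths. -/
def copyVerts {W V : Type} (φ : W → V) (P : W → W → List (V × V)) : Set V :=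
  Set.range φ ∪ {x | ∃ e ∈ copyArcs P, x = e.1 ∨ x = e.2}

/-- The arcs of `A` crossing backwards over position `α` of the ordering `σ`
(`σ` is 0-based: these are the arcs `(u,v)` with `σ v ≤ α < σ u`). -/
def cutSet {V : Type} (A : V → V → Prop) {n : ℕ} (σ : V ≃ Fin n) (α : ℕ) : Set (V × V) :=
  {e | A e.1 e.2 ∧ (σ e.2 : ℕ) ≤ α ∧ α < (σ e.1 : ℕ)}

namespace Stmt8Aux

variable {V : Type}

lemma copy_mono {W : Type} {H : W → W → Prop} {A1 A2 : V → V → Prop}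
    (h : ∀ a b, A1 a b → A2 a b) {φ : W → V} {P : W → W → List (V × V)}
    (hc : IsImmersionCopy H A1 φ P) : IsImmersionCopy H A2 φ P := by
  obtain ⟨h1, h2, h3, h4, h5⟩ := hc
  refine ⟨h1, fun u v huv => ?_, h3, h4, h5⟩
  obtain ⟨a, b, c, d, e⟩ := h2 u v huv
  exact ⟨a, fun e' he' => h _ _ (b e' he'), c, d, e⟩

lemma copy_arc {W : Type} {H : W → W → Prop} {A : V → V → Prop}
    {φ : W → V} {P : W → W → List (V × V)} (hc : IsImmersionCopy H A φ P)
    {e : V × V} (he : e ∈ copyArcs P) : A e.1 e.2 := by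
  obtain ⟨u, v, hm⟩ := he
  by_cases h : H u v
  · exact (hc.2.1 u v h).2.1 e hm
  · rw [hc.2.2.2.1 u v h] at hm; simp at hm

lemma walk_reach {Q : V → V → Prop} :
    ∀ (l : List (V × V)), (∀ e ∈ l, Q e.1 e.2) →
      List.Chain' (fun e f => e.2 = f.1) l →
      ∀ a b : V, l.head?.map Prod.fst = some a → l.getLast?.map Prod.snd = some b →
      Relation.ReflTransGen Q a b ∧
        ∀ e ∈ l, Relation.ReflTransGen Q a e.1 ∧ Relation.ReflTransGen Q e.2 b := by
  intro l
  induction l with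
  | nil => intro _ _ a b ha _; simp at ha
  | cons e l ih =>
    intro hQ hch a b ha hb
    have hae : e.1 = a := by simpa using ha
    have hQe : Q e.1 e.2 := hQ e List.mem_cons_self
    cases l with
    | nil =>
      have hbe : e.2 = b := by simpa using hb
      subst hae; subst hbe
      refine ⟨Relation.ReflTransGen.single hQe, fun e' he' => ?_⟩
      simp only [List.mem_singleton] at he'
      subst he'
      exact ⟨Relation.ReflTransGen.refl, Relation.ReflTransGen.refl⟩
    | cons f l' =>
      obtain ⟨hef, hch'⟩ := List.isChain_cons_cons.mp hch
      have hb' : (f :: l').getLast?.map Prod.snd = some b := by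
        rwa [List.getLast?_cons_cons] at hb
      have hhd : (f :: l').head?.map Prod.fst = some e.2 := by
        simp [hef]
      obtain ⟨hreach, hall⟩ := ih (fun e' he' => hQ e' (List.mem_cons_of_mem _ he')) hch'
        e.2 b hhd hb'
      subst hae
      refine ⟨Relation.ReflTransGen.head hQe hreach, fun e' he' => ?_⟩
      rcases List.mem_cons.mp he' with h | h
      · subst h; exact ⟨Relation.ReflTransGen.refl, hreach⟩
      · obtain ⟨h1, h2⟩ := hall e' h
        exact ⟨Relation.ReflTransGen.head hQe h1, h2⟩



section
variable {m : ℕ} {H : Fin m → Fin m → Prop} {A : V → V → Prop}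
  {φ : Fin m → V} {P : Fin m → Fin m → List (V × V)}

/-- every vertex image has an outgoing copy-arc (H strong, nontrivial) -/
lemma copy_phi_step (hc : IsImmersionCopy H A φ P)
    (hstrong : ∀ u v, Relation.ReflTransGen H u v)
    (hsimple : ∀ v, ¬ H v v) (harc : ∃ u v, H u v) :
    ∀ a : Fin m, ∃ y, (φ a, y) ∈ copyArcs P := by
  intro a
  obtain ⟨u0, v0, h0⟩ := harc
  have hne : u0 ≠ v0 := fun h => hsimple v0 (h ▸ h0)
  have hz : ∃ z, z ≠ a := by
    by_cases h : u0 = a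
    · exact ⟨v0, fun hh => hne (h.trans hh.symm)⟩
    · exact ⟨u0, h⟩
  obtain ⟨z, hza⟩ := hz
  rcases (hstrong a z).cases_head with h | ⟨b, hab, _⟩
  · exact absurd h.symm hza
  · have hw := hc.2.1 a b hab
    obtain ⟨e, he, he1⟩ := Option.map_eq_some_iff.mp hw.2.2.2.1
    have hmem : e ∈ P a b := List.mem_of_mem_head? he
    refine ⟨e.2, a, b, ?_⟩
    have : (φ a, e.2) = e := by rw [← he1]
    rw [this]; exact hmem

lemma copy_out (hc : IsImmersionCopy H A φ P)
    (hstrong : ∀ u v, Relation.ReflTransGen H u v)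
    (hsimple : ∀ v, ¬ H v v) (harc : ∃ u v, H u v) :
    ∀ w ∈ copyVerts φ P, ∃ y, (w, y) ∈ copyArcs P := by
  rintro w (⟨a, rfl⟩ | ⟨e, ⟨u, v, hm⟩, heq⟩)
  · exact copy_phi_step hc hstrong hsimple harc a
  · have huv : H u v := by
      by_contra h
      rw [hc.2.2.2.1 u v h] at hm; simp at hm
    have hw := hc.2.1 u v huv
    have hQ : ∀ e' ∈ P u v, (e'.1, e'.2) ∈ copyArcs P := by
      intro e' he'
      exact ⟨u, v, by simpa using he'⟩
    obtain ⟨_, hall⟩ := Stmt8Aux.walk_reach (Q := fun p q => (p, q) ∈ copyArcs P)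
      (P u v) hQ hw.2.2.1 (φ u) (φ v)
      hw.2.2.2.1 hw.2.2.2.2
    obtain ⟨h1, h2⟩ := hall e hm
    rcases heq with h | h
    · exact ⟨e.2, by rw [h]; simpa using ⟨u, v, hm⟩⟩
    · subst h
      rcases h2.cases_head with heq2 | ⟨c, hstep, _⟩
      · rw [heq2]; exact copy_phi_step hc hstrong hsimple harc v
      · exact ⟨c, hstep⟩

lemma copy_reach (hc : IsImmersionCopy H A φ P)
    (hstrong : ∀ u v, Relation.ReflTransGen H u v) :
    ∀ p ∈ copyVerts φ P, ∀ q ∈ copyVerts φ P,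
      Relation.ReflTransGen (fun p q => (p, q) ∈ copyArcs P) p q := by
  set Q : V → V → Prop := fun p q => (p, q) ∈ copyArcs P with hQdef
  have hwalk : ∀ u v : Fin m, H u v →
      Relation.ReflTransGen Q (φ u) (φ v) ∧
        ∀ e ∈ P u v, Relation.ReflTransGen Q (φ u) e.1 ∧ Relation.ReflTransGen Q e.2 (φ v) := by
    intro u v huv
    have hw := hc.2.1 u v huv
    exact Stmt8Aux.walk_reach (Q := Q) (P u v) (fun e' he' => ⟨u, v, by simpa using he'⟩)
      hw.2.2.1 (φ u) (φ v) hw.2.2.2.1 hw.2.2.2.2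
  have hphi : ∀ a b : Fin m, Relation.ReflTransGen Q (φ a) (φ b) := by
    intro a b
    induction hstrong a b with
    | refl => exact Relation.ReflTransGen.refl
    | tail _ hxb ih => exact ih.trans (hwalk _ _ hxb).1
  have hto : ∀ p ∈ copyVerts φ P, ∃ b, Relation.ReflTransGen Q p (φ b) := by
    rintro p (⟨a, rfl⟩ | ⟨e, ⟨u, v, hm⟩, heq⟩)
    · exact ⟨a, Relation.ReflTransGen.refl⟩
    · have huv : H u v := by
        by_contra h; rw [hc.2.2.2.1 u v h] at hm; simp at hm
      obtain ⟨h1, h2⟩ := (hwalk u v huv).2 e hm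
      rcases heq with h | h
      · subst h
        exact ⟨v, Relation.ReflTransGen.head ⟨u, v, by simpa using hm⟩ h2⟩
      · subst h; exact ⟨v, h2⟩
  have hfrom : ∀ q ∈ copyVerts φ P, ∃ a, Relation.ReflTransGen Q (φ a) q := by
    rintro q (⟨a, rfl⟩ | ⟨e, ⟨u, v, hm⟩, heq⟩)
    · exact ⟨a, Relation.ReflTransGen.refl⟩
    · have huv : H u v := by
        by_contra h; rw [hc.2.2.2.1 u v h] at hm; simp at hm
      obtain ⟨h1, h2⟩ := (hwalk u v huv).2 e hm
      rcases heq with h | h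
      · subst h; exact ⟨u, h1⟩
      · subst h
        exact ⟨u, h1.tail ⟨u, v, by simpa using hm⟩⟩
  intro p hp q hq
  obtain ⟨b, hb⟩ := hto p hp
  obtain ⟨a, ha⟩ := hfrom q hq
  exact (hb.trans (hphi b a)).trans ha

lemma reach_pred {Q : V → V → Prop} {pred : V → Prop}
    (h : ∀ p q, Q p q → pred p → pred q) {x y : V}
    (hr : Relation.ReflTransGen Q x y) : pred x → pred y := by
  induction hr with
  | refl => exact id
  | tail _ hstep ih => exact fun hx => h _ _ hstep (ih hx)

end

lemma mem_cutSet {V : Type} {A : V → V → Prop} {n : ℕ} {σ : V ≃ Fin n} {p q : V} {α : ℕ}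
    (h1 : A p q) (h2 : (σ q : ℕ) ≤ α) (h3 : α < (σ p : ℕ)) : (p, q) ∈ cutSet A σ α :=
  ⟨h1, h2, h3⟩

theorem aux {V : Type} [Fintype V] (A : V → V → Prop) (hT : IsTournament A)
    {m : ℕ} (H : Fin m → Fin m → Prop)
    (hsimple : ∀ v, ¬ H v v)
    (hstrong : ∀ u v, Relation.ReflTransGen H u v)
    (harc : ∃ u v, H u v)
    (c : ℕ) (σ : V ≃ Fin (Fintype.card V)) (hσ : ∀ α : ℕ, (cutSet A σ α).ncard ≤ c) :
    ∀ k t : ℕ,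
      (¬ ∃ (φs : Fin (k + 1) → Fin m → V) (Ps : Fin (k + 1) → Fin m → Fin m → List (V × V)),
        (∀ i, IsImmersionCopy H A (φs i) (Ps i) ∧
          ∀ x ∈ copyVerts (φs i) (Ps i), t ≤ (σ x : ℕ)) ∧
        ∀ i i', i ≠ i' → Disjoint (copyVerts (φs i) (Ps i)) (copyVerts (φs i') (Ps i'))) →
      ∃ F : Set (V × V), F ⊆ {e | A e.1 e.2} ∧ F.ncard ≤ 2 * k * c ∧
        ∀ φ P, IsImmersionCopy H (fun a b => A a b ∧ (a, b) ∉ F) φ P →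
          (∀ x ∈ copyVerts φ P, t ≤ (σ x : ℕ)) → False := by
  intro k
  induction k with
  | zero =>
    intro t hnp
    refine ⟨∅, by simp, by simp, fun φ P hc hab => ?_⟩
    apply hnp
    refine ⟨fun _ => φ, fun _ => P, fun i => ⟨copy_mono (fun a b h => h.1) hc, hab⟩, ?_⟩
    intro i i' hne; exact absurd (Fin.ext (by omega)) hne
  | succ k ih =>
    intro t hnp
    by_cases hex : ∃ φ P, IsImmersionCopy H A φ P ∧ ∀ x ∈ copyVerts φ P, t ≤ (σ x : ℕ)
    swap
    · exact ⟨∅, by simp, by simp,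
        fun φ P hc hab => hex ⟨φ, P, copy_mono (fun a b h => h.1) hc, hab⟩⟩
    · obtain ⟨u1, v1, h1⟩ := id harc
      set S : Set ℕ := {n | ∃ φ P, IsImmersionCopy H A φ P ∧
        ∀ x ∈ copyVerts φ P, t ≤ (σ x : ℕ) ∧ (σ x : ℕ) ≤ n} with hSdef
      have hSne : S.Nonempty := by
        obtain ⟨φ, P, hc, hab⟩ := hex
        exact ⟨Fintype.card V, φ, P, hc,
          fun x hx => ⟨hab x hx, Nat.le_of_lt (σ x).2⟩⟩
      set j := sInf S with hjdef
      obtain ⟨φM, PM, hMc, hMb⟩ := Nat.sInf_mem hSne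
      have hMu1 : φM u1 ∈ copyVerts φM PM := Or.inl ⟨u1, rfl⟩
      have htj : t ≤ j := le_trans (hMb _ hMu1).1 (hMb _ hMu1).2
      have hdM : ∀ (φ' : Fin m → V) (P' : Fin m → Fin m → List (V × V)),
          (∀ x ∈ copyVerts φ' P', j + 1 ≤ (σ x : ℕ)) →
          Disjoint (copyVerts φM PM) (copyVerts φ' P') := by
        intro φ' P' hup
        rw [Set.disjoint_left]
        intro x hx hx'
        have := (hMb x hx).2
        have := hup x hx'
        omega
      have hnp' : ¬ ∃ (φs : Fin (k + 1) → Fin m → V)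
          (Ps : Fin (k + 1) → Fin m → Fin m → List (V × V)),
          (∀ i, IsImmersionCopy H A (φs i) (Ps i) ∧
            ∀ x ∈ copyVerts (φs i) (Ps i), j + 1 ≤ (σ x : ℕ)) ∧
          ∀ i i', i ≠ i' →
            Disjoint (copyVerts (φs i) (Ps i)) (copyVerts (φs i') (Ps i')) := by
        rintro ⟨φs, Ps, hcs, hdj⟩
        apply hnp
        refine ⟨Fin.cons φM φs, Fin.cons PM Ps, ?_, ?_⟩
        · intro i
          rcases Fin.eq_zero_or_eq_succ i with rfl | ⟨a, rfl⟩
          · simp only [Fin.cons_zero]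
            exact ⟨hMc, fun x hx => (hMb x hx).1⟩
          · simp only [Fin.cons_succ]
            exact ⟨(hcs a).1, fun x hx => le_trans (by omega) ((hcs a).2 x hx)⟩
        · intro i i' hne
          rcases Fin.eq_zero_or_eq_succ i with rfl | ⟨a, rfl⟩ <;>
            rcases Fin.eq_zero_or_eq_succ i' with rfl | ⟨b, rfl⟩
          · exact absurd rfl hne
          · simp only [Fin.cons_zero, Fin.cons_succ]
            exact hdM _ _ (hcs b).2
          · simp only [Fin.cons_zero, Fin.cons_succ]
            exact (hdM _ _ (hcs a).2).symm
          · simp only [Fin.cons_succ]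
            exact hdj a b (fun h => hne (by rw [h]))
      obtain ⟨F', hF'sub, hF'card, hF'kill⟩ := ih (j + 1) hnp'
      set F : Set (V × V) := cutSet A σ (j - 1) ∪ cutSet A σ j ∪ F' with hFdef
      refine ⟨F, ?_, ?_, ?_⟩
      · rintro e ((he | he) | he)
        · exact he.1
        · exact he.1
        · exact hF'sub he
      · calc F.ncard ≤ (cutSet A σ (j - 1) ∪ cutSet A σ j).ncard + F'.ncard :=
              Set.ncard_union_le _ _
          _ ≤ (cutSet A σ (j - 1)).ncard + (cutSet A σ j).ncard + F'.ncard :=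
              Nat.add_le_add_right (Set.ncard_union_le _ _) _
          _ ≤ c + c + 2 * k * c := add_le_add (add_le_add (hσ _) (hσ _)) hF'card
          _ ≤ 2 * (k + 1) * c := by ring_nf; omega
      · intro φ P hc hab
        have harcF : ∀ p q : V, (p, q) ∈ copyArcs P → A p q ∧ (p, q) ∉ F := by
          intro p q hpq
          exact copy_arc hc hpq
        have hcA : IsImmersionCopy H A φ P := copy_mono (fun a b h => h.1) hc
        by_cases hhigh : ∃ x ∈ copyVerts φ P, j < (σ x : ℕ)
        · obtain ⟨x, hx, hxj⟩ := hhigh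
          have hall : ∀ q ∈ copyVerts φ P, j + 1 ≤ (σ q : ℕ) := by
            intro q hq
            have hr := copy_reach hc hstrong x hx q hq
            have hlt : j < (σ q : ℕ) := by
              refine reach_pred (pred := fun p => j < (σ p : ℕ)) ?_ hr hxj
              intro p q' hpq hpj
              obtain ⟨hA, hFm⟩ := harcF p q' hpq
              by_contra hq'
              exact hFm (Set.mem_union_left _
                (Set.mem_union_right _ (mem_cutSet hA (by omega) hpj)))
            omega
          exact hF'kill φ P
            (copy_mono (fun a b h => ⟨h.1, fun hm => h.2 (Set.mem_union_right _ hm)⟩) hc) hall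
        · push_neg at hhigh
          have hw : ∃ w ∈ copyVerts φ P, (σ w : ℕ) = j := by
            by_contra hno
            push_neg at hno
            have hx1 : φ u1 ∈ copyVerts φ P := Or.inl ⟨u1, rfl⟩
            have hlt : ∀ x ∈ copyVerts φ P, (σ x : ℕ) < j := fun x hx =>
              lt_of_le_of_ne (hhigh x hx) (hno x hx)
            have hj1 : 1 ≤ j := by have := hlt _ hx1; omega
            have hle : j ≤ j - 1 := Nat.sInf_le
              ⟨φ, P, hcA, fun x hx => ⟨hab x hx, by have := hlt x hx; omega⟩⟩
            omega
          obtain ⟨w, hwv, hwj⟩ := hw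
          obtain ⟨y, hwy⟩ := copy_out hc hstrong hsimple harc w hwv
          obtain ⟨hA, hFnot⟩ := harcF w y hwy
          have hyv : y ∈ copyVerts φ P := Or.inr ⟨(w, y), hwy, Or.inr rfl⟩
          have hyw : y ≠ w := fun h => hT.1 w (h ▸ hA)
          have hy : (σ y : ℕ) < j := by
            have h1 := hhigh y hyv
            have h2 : (σ y : ℕ) ≠ j := fun h => hyw (σ.injective (Fin.ext (by rw [h, ← hwj])))
            omega
          exact hFnot (Set.mem_union_left _
            (Set.mem_union_left _ (mem_cutSet hA (by omega) (by omega))))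

end Stmt8Aux

/-- Let `H` be a strongly connected simple digraph with at least one arc, `k ≥ 1`, and `T`
a tournament admitting a vertex ordering of width at most `c` that does not contain `k`
pairwise vertex-disjoint immersion copies of `H`. Then there is a set `F` of at most
`2(k-1)c` arcs of `T` such that `T - F` contains no immersion copy of `H`. -/
theorem stmt8 {V : Type} [Fintype V] (A : V → V → Prop) (hT : IsTournament A)
    {m : ℕ} (H : Fin m → Fin m → Prop)
    (hsimple : ∀ v, ¬ H v v)
    (hstrong : ∀ u v, Relation.ReflTransGen H u v)
    (harc : ∃ u v, H u v)
    (k c : ℕ) (hk : 1 ≤ k)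
    (hwidth : ∃ σ : V ≃ Fin (Fintype.card V), ∀ α : ℕ, (cutSet A σ α).ncard ≤ c)
    (hnopack : ¬ ∃ (φs : Fin k → Fin m → V) (Ps : Fin k → Fin m → Fin m → List (V × V)),
      (∀ t, IsImmersionCopy H A (φs t) (Ps t)) ∧
      ∀ t t', t ≠ t' →
        Disjoint (copyVerts (φs t) (Ps t)) (copyVerts (φs t') (Ps t'))) :
    ∃ F : Set (V × V), F ⊆ {e | A e.1 e.2} ∧ F.ncard ≤ 2 * (k - 1) * c ∧
      ∀ (φ : Fin m → V) (P : Fin m → Fin m → List (V × V)),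
        ¬ IsImmersionCopy H (fun a b => A a b ∧ (a, b) ∉ F) φ P := by
  obtain ⟨k', rfl⟩ : ∃ k', k = k' + 1 := ⟨k - 1, by omega⟩
  obtain ⟨σ, hσ⟩ := hwidth
  have hnp : ¬ ∃ (φs : Fin (k' + 1) → Fin m → V)
      (Ps : Fin (k' + 1) → Fin m → Fin m → List (V × V)),
      (∀ i, IsImmersionCopy H A (φs i) (Ps i) ∧
        ∀ x ∈ copyVerts (φs i) (Ps i), 0 ≤ (σ x : ℕ)) ∧
      ∀ i i', i ≠ i' →
        Disjoint (copyVerts (φs i) (Ps i)) (copyVerts (φs i') (Ps i')) := by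
    rintro ⟨φs, Ps, hcs, hdj⟩
    exact hnopack ⟨φs, Ps, fun i => (hcs i).1, hdj⟩
  obtain ⟨F, hsub, hcard, hkill⟩ :=
    Stmt8Aux.aux A hT H hsimple hstrong harc c σ hσ k' 0 hnp
  exact ⟨F, hsub, by simpa using hcard, fun φ P hc => hkill φ P hc (fun x _ => Nat.zero_le _)⟩
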